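/- Let r > 0, n ∈ ℕ, M > 0, and let f be holomorphic on the punctured disk {ζ ∈ ℂ : 0 < |ζ| < r} with |f(ζ)| ≤ M/|ζ|^n there. Suppose q ≥ n and there exist C > 0, η > 0 such that |f(ξ)| ≤ C · ξ^q for all real ξ ∈ (0, η). Then for all ζ with 0 < |ζ| ≤ r/2 one has |f(ζ)| ≤ 2M · |ζ/r|^q / |ζ|^n. -/

import Mathlib

open Complex Set Filter Metric

open scoped Topology

theorem stmt1 (r : ℝ) (hr : 0 < r) (n : ℕ) (M : ℝ) (hM : 0 < M) (f : ℂ → ℂ)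
    (hf : DifferentiableOn ℂ f {ζ : ℂ | 0 < ‖ζ‖ ∧ ‖ζ‖ < r})
    (hbound : ∀ ζ : ℂ, 0 < ‖ζ‖ → ‖ζ‖ < r →
      ‖f ζ‖ ≤ M / ‖ζ‖ ^ n)
    (q : ℕ) (hq : n ≤ q) (C η : ℝ) (hC : 0 < C) (hη : 0 < η)
    (hdecay : ∀ ξ : ℝ, 0 < ξ → ξ < η → ‖f ξ‖ ≤ C * ξ ^ q) :
    ∀ ζ : ℂ, 0 < ‖ζ‖ → ‖ζ‖ ≤ r / 2 →
      ‖f ζ‖ ≤ 2 * M * (‖ζ‖ / r) ^ q / ‖ζ‖ ^ n := by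
  set g : ℂ → ℂ := fun z => z ^ n * f z with hg_def
  set S : Set ℂ := Metric.ball (0 : ℂ) r with hS
  have hSmem : {ζ : ℂ | 0 < ‖ζ‖ ∧ ‖ζ‖ < r} = S \ {0} := by
    ext z
    simp only [mem_setOf_eq, hS, Metric.mem_ball, dist_zero_right,
      mem_diff, mem_singleton_iff]
    constructor
    · rintro ⟨h1, h2⟩
      exact ⟨h2, fun h => by simp [h] at h1⟩
    · rintro ⟨h1, h2⟩
      exact ⟨norm_pos_iff.mpr h2, h1⟩
  have hg_diff : DifferentiableOn ℂ g (S \ {0}) := by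
    rw [← hSmem]
    exact ((differentiable_pow n).differentiableOn).mul hf
  have hgM : ∀ z ∈ S \ {0}, ‖g z‖ ≤ M := by
    intro z hz
    rw [← hSmem] at hz
    obtain ⟨h1, h2⟩ := hz
    have hzn : (0 : ℝ) < ‖z‖ ^ n := pow_pos h1 n
    have := hbound z h1 h2
    calc ‖g z‖ = ‖z‖ ^ n * ‖f z‖ := by
          simp [hg_def, norm_mul, norm_pow]
      _ ≤ ‖z‖ ^ n * (M / ‖z‖ ^ n) :=
          mul_le_mul_of_nonneg_left this hzn.le
      _ = M := by field_simp
  set F : ℂ → ℂ := Function.update g 0 (limUnder (𝓝[≠] (0 : ℂ)) g) with hF_def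
  have hF : DifferentiableOn ℂ F S := by
    apply Complex.differentiableOn_update_limUnder_of_bddAbove
      (Metric.isOpen_ball.mem_nhds (Metric.mem_ball_self hr)) hg_diff
    refine ⟨M, ?_⟩
    rintro x ⟨z, hz, rfl⟩
    exact hgM z hz
  have hFg : ∀ z : ℂ, z ≠ 0 → F z = g z := fun z hz => Function.update_of_ne hz _ _
  -- power series of F at 0
  set ρ : NNReal := ⟨3 * r / 4, by positivity⟩ with hρ
  have hρr : (ρ : ℝ) = 3 * r / 4 := rfl
  have hp : HasFPowerSeriesOnBall F (cauchyPowerSeries F 0 (ρ : ℝ)) 0 ρ := by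
    apply DifferentiableOn.hasFPowerSeriesOnBall
    · exact hF.mono (Metric.closedBall_subset_ball (by rw [hρr]; linarith))
    · rw [← NNReal.coe_pos, hρr]; linarith
  set p := cauchyPowerSeries F 0 (ρ : ℝ) with hp_def
  have hAt : HasFPowerSeriesAt F p 0 := hp.hasFPowerSeriesAt
  -- Cauchy estimates
  have hMcirc : ∀ R' : ℝ, 0 < R' → R' < r → ∀ i,
      ‖cauchyPowerSeries F 0 R' i‖ ≤ M / R' ^ i := by
    intro R' h0 hR i
    have hmap : ∀ θ : ℝ, circleMap 0 R' θ ∈ S \ {0} := by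
      intro θ
      have habs : ‖circleMap 0 R' θ‖ = R' := by
        simpa [abs_of_pos h0] using norm_circleMap_zero R' θ
      constructor
      · simp [hS, Metric.mem_ball, dist_zero_right, habs, hR]
      · simp only [mem_singleton_iff]
        intro h
        rw [h] at habs
        simp only [norm_zero] at habs
        exact absurd habs.symm h0.ne'
    have hcont : ContinuousOn (fun θ : ℝ => ‖F (circleMap 0 R' θ)‖) (uIcc 0 (2 * Real.pi)) := by
      apply ContinuousOn.norm
      exact hF.continuousOn.comp (continuous_circleMap 0 R').continuousOn
        (fun θ _ => (hmap θ).1)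
    have hint := hcont.intervalIntegrable (μ := MeasureTheory.volume)
    have hintle : (∫ θ in (0:ℝ)..2 * Real.pi, ‖F (circleMap 0 R' θ)‖) ≤ 2 * Real.pi * M := by
      have h2 := intervalIntegral.integral_mono_on (μ := MeasureTheory.volume)
        Real.two_pi_pos.le hint (intervalIntegrable_const (c := M)) (fun θ _ => by
          rw [hFg _ (fun h => (hmap θ).2 h)]
          exact hgM _ (hmap θ))
      simpa using h2
    calc ‖cauchyPowerSeries F 0 R' i‖
        ≤ ((2 * Real.pi)⁻¹ * ∫ θ in (0:ℝ)..2 * Real.pi, ‖F (circleMap 0 R' θ)‖) * |R'|⁻¹ ^ i :=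
          norm_cauchyPowerSeries_le F 0 R' i
      _ ≤ ((2 * Real.pi)⁻¹ * (2 * Real.pi * M)) * |R'|⁻¹ ^ i := by
          apply mul_le_mul_of_nonneg_right _ (by positivity)
          exact mul_le_mul_of_nonneg_left hintle (by positivity)
      _ = M / R' ^ i := by
          rw [abs_of_pos h0]
          field_simp
          rw [one_div_pow, one_div_mul_cancel (pow_ne_zero _ h0.ne')]
  -- coefficient bounds at radius r
  have hcoeff : ∀ i, ‖p.coeff i‖ ≤ M / r ^ i := by
    intro i
    have key : ∀ R' ∈ Ioo (0:ℝ) r, ‖p.coeff i‖ ≤ M / R' ^ i := by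
      rintro R' ⟨h0, hR⟩
      have hd : DifferentiableOn ℂ F (Metric.closedBall 0 R') :=
        hF.mono (Metric.closedBall_subset_ball hR)
      have h2 := hd.hasFPowerSeriesOnBall (R := ⟨R', h0.le⟩) (by exact_mod_cast h0)
      have heq : cauchyPowerSeries F 0 R' = p :=
        h2.hasFPowerSeriesAt.eq_formalMultilinearSeries hAt
      have hle : ‖p i‖ ≤ M / R' ^ i := heq ▸ hMcirc R' h0 hR i
      refine le_trans ?_ hle
      have h3 := (p i).le_opNorm (fun _ => (1:ℂ))
      simp only [norm_one, Finset.prod_const, one_pow, mul_one] at h3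
      calc ‖p.coeff i‖ = ‖p i fun _ => (1:ℂ)‖ := rfl
        _ ≤ ‖p i‖ := h3
    have hlim : Tendsto (fun R' : ℝ => M / R' ^ i) (𝓝[<] r) (𝓝 (M / r ^ i)) := by
      apply Tendsto.mono_left _ nhdsWithin_le_nhds
      exact (continuousAt_const.div ((continuous_pow i).continuousAt)
        (pow_ne_zero i hr.ne')).tendsto
    refine ge_of_tendsto hlim ?_
    filter_upwards [Ioo_mem_nhdsLT_of_mem (Set.mem_Ioc.mpr ⟨hr, le_refl r⟩)] with R' hR'
    exact key R' hR'
  -- decay of F along positive reals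
  have hdecayF : ∀ ξ : ℝ, 0 < ξ → ξ < η → ‖F (ξ:ℂ)‖ ≤ C * ξ ^ (q + n) := by
    intro ξ h0 hξη
    have hne : (ξ:ℂ) ≠ 0 := Complex.ofReal_ne_zero.mpr h0.ne'
    rw [hFg _ hne]
    have : ‖g (ξ:ℂ)‖ = ξ ^ n * ‖f ξ‖ := by
      simp [hg_def, norm_mul, norm_pow, Complex.norm_real,
        abs_of_pos h0]
    rw [this]
    calc ξ ^ n * ‖f ξ‖ ≤ ξ ^ n * (C * ξ ^ q) :=
          mul_le_mul_of_nonneg_left (hdecay ξ h0 hξη) (by positivity)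
      _ = C * ξ ^ (q + n) := by rw [pow_add]; ring
  -- vanishing of low coefficients
  have hvanish : ∀ k < q, p.coeff k = 0 := by
    by_cases hp0 : p = 0
    · intro k _
      simp [hp0, FormalMultilinearSeries.coeff]
    have hqord : q ≤ p.order := by
      by_contra hlt
      push_neg at hlt
      set d := p.order with hd
      set G := (Function.swap dslope (0:ℂ))^[d] F with hG
      have hG0 : G 0 ≠ 0 := hAt.iterate_dslope_fslope_ne_zero hp0
      have hGc : ContinuousAt G 0 :=
        (hAt.has_fpower_series_iterate_dslope_fslope d).continuousAt
      have hFeq := Eventually.of_forall (f := 𝓝 (0:ℂ)) hAt.eq_pow_order_mul_iterate_dslope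
      have hreal : Tendsto (fun ξ : ℝ => (ξ:ℂ)) (𝓝[>] (0:ℝ)) (𝓝 (0:ℂ)) := by
        have := (Complex.continuous_ofReal.tendsto (0:ℝ))
        simpa using this.mono_left nhdsWithin_le_nhds
      have hev : ∀ᶠ ξ : ℝ in 𝓝[>] 0, ‖G (ξ:ℂ)‖ ≤ C * ξ ^ (q + n - d) := by
        filter_upwards [hreal.eventually hFeq, Ioo_mem_nhdsGT_of_mem
          (Set.mem_Ico.mpr ⟨le_refl (0:ℝ), hη⟩)] with ξ h1 h2
        have h0 : 0 < ξ := h2.1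
        have hF' := hdecayF ξ h0 h2.2
        rw [h1, sub_zero, smul_eq_mul, norm_mul, norm_pow, Complex.norm_real,
          Real.norm_eq_abs, abs_of_pos h0] at hF'
        have hd' : ξ ^ d > 0 := by positivity
        rw [← le_div_iff₀' hd'] at hF'
        calc ‖G (ξ:ℂ)‖ ≤ C * ξ ^ (q + n) / ξ ^ d := hF'
          _ = C * ξ ^ (q + n - d) := by
              rw [mul_div_assoc, pow_sub₀ ξ h0.ne' (by omega)]
              field_simp
      have h2 : Tendsto (fun ξ : ℝ => ‖G (ξ:ℂ)‖) (𝓝[>] 0) (𝓝 ‖G 0‖) :=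
        ((hGc.tendsto.comp hreal).norm)
      have h3 : Tendsto (fun ξ : ℝ => C * ξ ^ (q + n - d)) (𝓝[>] 0) (𝓝 0) := by
        have hk : q + n - d ≠ 0 := by omega
        have := (((continuous_pow (q + n - d)).tendsto (0:ℝ)).const_mul C).mono_left
          (nhdsWithin_le_nhds (s := Ioi (0:ℝ)))
        simpa [zero_pow hk] using this
      have h4 : Tendsto (fun ξ : ℝ => ‖G (ξ:ℂ)‖) (𝓝[>] 0) (𝓝 0) :=
        squeeze_zero' (Eventually.of_forall fun _ => norm_nonneg _) hev h3
      exact hG0 (norm_eq_zero.mp (tendsto_nhds_unique h2 h4))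
    intro k hk
    rw [FormalMultilinearSeries.coeff_eq_zero]
    exact p.apply_eq_zero_of_lt_order (lt_of_lt_of_le hk hqord)
  -- final estimate
  intro ζ hζ0 hζr
  have hζne : ζ ≠ 0 := norm_pos_iff.mp hζ0
  set x : ℝ := ‖ζ‖ / r with hx
  have hx0 : 0 ≤ x := by positivity
  have hxhalf : x ≤ 1/2 := by
    rw [hx, div_le_div_iff₀ hr (by norm_num : (0:ℝ) < 2)]
    linarith
  have hx1 : x < 1 := lt_of_le_of_lt hxhalf (by norm_num)
  have hmem : ζ ∈ EMetric.ball (0:ℂ) ρ := by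
    show ζ ∈ Metric.eball (0:ℂ) ρ
    rw [mem_emetric_ball_zero_iff, enorm_eq_nnnorm, ENNReal.coe_lt_coe,
      ← NNReal.coe_lt_coe, coe_nnnorm, hρr]
    linarith
  have hsum := hp.hasSum hmem
  simp only [zero_add, FormalMultilinearSeries.apply_eq_pow_smul_coeff] at hsum
  obtain ⟨t, ht1, ht2⟩ := hsum.exists_hasSum_smul_of_apply_eq_zero hvanish
  have hb : ∀ m, ‖ζ ^ m • p.coeff (m + q)‖ ≤ (M / r ^ q) * x ^ m := by
    intro m
    rw [norm_smul, norm_pow]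
    calc ‖ζ‖ ^ m * ‖p.coeff (m + q)‖
        ≤ ‖ζ‖ ^ m * (M / r ^ (m + q)) :=
          mul_le_mul_of_nonneg_left (hcoeff (m + q)) (by positivity)
      _ = (M / r ^ q) * x ^ m := by
          rw [hx, div_pow, pow_add]
          field_simp
  have hgeo : HasSum (fun m => (M / r ^ q) * x ^ m) ((M / r ^ q) * (1 - x)⁻¹) :=
    (hasSum_geometric_of_lt_one hx0 hx1).mul_left _
  have hsn : Summable fun m => ‖ζ ^ m • p.coeff (m + q)‖ :=
    Summable.of_nonneg_of_le (fun _ => norm_nonneg _) hb hgeo.summable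
  have ht : ‖t‖ ≤ (M / r ^ q) * (1 - x)⁻¹ := by
    rw [← ht2.tsum_eq]
    calc ‖∑' m, ζ ^ m • p.coeff (m + q)‖ ≤ ∑' m, ‖ζ ^ m • p.coeff (m + q)‖ :=
          norm_tsum_le_tsum_norm hsn
      _ ≤ ∑' m, (M / r ^ q) * x ^ m := Summable.tsum_le_tsum hb hsn hgeo.summable
      _ = (M / r ^ q) * (1 - x)⁻¹ := hgeo.tsum_eq
  have hinv : (1 - x)⁻¹ ≤ 2 := by
    have h12 : (1:ℝ)/2 ≤ 1 - x := by linarith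
    calc (1 - x)⁻¹ ≤ ((1:ℝ)/2)⁻¹ := by
          apply inv_anti₀ (by norm_num) h12
      _ = 2 := by norm_num
  have hFζ : ‖F ζ‖ ≤ 2 * M * x ^ q := by
    rw [← ht1, smul_eq_mul, norm_mul, norm_pow]
    calc ‖ζ‖ ^ q * ‖t‖
        ≤ ‖ζ‖ ^ q * ((M / r ^ q) * (1 - x)⁻¹) :=
          mul_le_mul_of_nonneg_left ht (by positivity)
      _ = (M * x ^ q) * (1 - x)⁻¹ := by
          rw [hx, div_pow]
          field_simp
      _ ≤ (M * x ^ q) * 2 := mul_le_mul_of_nonneg_left hinv (by positivity)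
      _ = 2 * M * x ^ q := by ring
  have hfabs : ‖f ζ‖ = ‖F ζ‖ / ‖ζ‖ ^ n := by
    rw [hFg ζ hζne]
    simp only [hg_def, norm_mul, norm_pow]
    field_simp
  rw [hfabs]
  exact (div_le_div_iff_of_pos_right (by positivity)).mpr hFζ
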